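/- Let n ≥ k ≥ 3. For every X = (x_{ij}) ∈ M_{n,2}(F) there exists B ∈ M_{n,k−2}(F) such that det_{n,k}(X|B) = Σ_{l=3}^{n−k+3} (−1)^l · [ (x_{1,1} − x_{2,1})·x_{l,2} − (x_{1,2} − x_{2,2})·x_{l,1} ]. -/

import Mathlib

/- The Cullis determinant of an `n × k` matrix: the alternating sum of its maximal
(`k × k`) minors, indexed by strictly increasing selections of `k` rows. -/
open Classical in
noncomputable def cullisDet {F : Type*} [Field F] {n k : ℕ} (X : Matrix (Fin n) (Fin k) F) : F :=
  ∑ f ∈ Finset.univ.filter (fun f : Fin k → Fin n => StrictMono f),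
    (-1 : F) ^ (∑ α : Fin k, ((f α : ℕ) + (α : ℕ))) * (X.submatrix f id).det

/-- The block matrix `X|B` obtained by appending the `k − 2` columns of `B` to the
right of the two columns of `X`. -/
def hcatK {F : Type*} [Field F] {n k : ℕ} (X : Matrix (Fin n) (Fin 2) F)
    (B : Matrix (Fin n) (Fin (k - 2)) F) : Matrix (Fin n) (Fin k) F :=
  fun i j =>
    if h : (j : ℕ) < 2 then X i ⟨(j : ℕ), h⟩
    else B i ⟨(j : ℕ) - 2, by have := j.isLt; omega⟩


open Finset Matrix

section Aux

variable {F : Type*} [Field F]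

/-- The auxiliary matrix `B`: column `0` is `ε (e₀ + e₁)` with
`ε = (-1)^((k-3)(n-k))`; column `j ≥ 1` is the unit vector at row `n-k+2+j`. -/
def auxB (F : Type*) [Field F] (n k : ℕ) : Matrix (Fin n) (Fin (k - 2)) F :=
  fun i j =>
    if j.val = 0 then (if i.val ≤ 1 then (-1 : F) ^ ((k - 3) * (n - k)) else 0)
    else if i.val = n - k + 2 + j.val then 1 else 0

/-- Extension of a strictly monotone selection of three rows (below `n-k+3`) to a
selection of `k` rows whose last `k-3` rows are the top `k-3` rows. -/
def fext {n k : ℕ} (hk : 3 ≤ k) (hn : k ≤ n) (g : Fin 3 → Fin (n - k + 3)) :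
    Fin k → Fin n :=
  fun α => if h : α.val < 3 then ⟨(g ⟨α.val, h⟩).val, by have := (g ⟨α.val, h⟩).isLt; omega⟩
    else ⟨n - k + α.val, by have := α.isLt; omega⟩

def rowc {n k : ℕ} (hk : 3 ≤ k) (hn : k ≤ n) (a : Fin (n - k + 3)) : Fin n :=
  ⟨a.val, by have := a.isLt; omega⟩

/-- 2×2 minor on rows `a`, `b`. -/
def DD {n k : ℕ} (hk : 3 ≤ k) (hn : k ≤ n) (X : Matrix (Fin n) (Fin 2) F)
    (a b : Fin (n - k + 3)) : F :=
  X (rowc hk hn a) 0 * X (rowc hk hn b) 1 - X (rowc hk hn a) 1 * X (rowc hk hn b) 0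

def ww {m : ℕ} (a : Fin m) : F := if a.val ≤ 1 then 1 else 0

lemma strictMono_fin3 {α : Type*} [Preorder α] {g : Fin 3 → α} :
    StrictMono g ↔ g 0 < g 1 ∧ g 1 < g 2 := by
  constructor
  · intro h; exact ⟨h (by decide), h (by decide)⟩
  · rintro ⟨h1, h2⟩ i j hij
    fin_cases i <;> fin_cases j <;> first
      | exact absurd hij (by decide)
      | exact h1 | exact h2 | exact h1.trans h2

/-- Swap `0` and `1` in `Fin (m + 3)`. -/
def sw {m : ℕ} (a : Fin (m + 3)) : Fin (m + 3) :=
  if a.val = 0 then ⟨1, by omega⟩ else if a.val = 1 then ⟨0, by omega⟩ else a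

variable {n k : ℕ} (hk : 3 ≤ k) (hn : k ≤ n) (X : Matrix (Fin n) (Fin 2) F)


lemma Mcol0 (i : Fin n) (j : Fin k) (hj : j.val = 0) :
    hcatK X (auxB F n k) i j = X i 0 := by
  unfold hcatK
  rw [dif_pos (by omega)]
  congr 1
  exact Fin.ext (by simp [hj])

lemma Mcol1 (i : Fin n) (j : Fin k) (hj : j.val = 1) :
    hcatK X (auxB F n k) i j = X i 1 := by
  unfold hcatK
  rw [dif_pos (by omega)]
  congr 1
  exact Fin.ext (by simp [hj])

lemma Mcol2 (i : Fin n) (j : Fin k) (hj : j.val = 2) :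
    hcatK X (auxB F n k) i j =
      if i.val ≤ 1 then (-1 : F) ^ ((k - 3) * (n - k)) else 0 := by
  unfold hcatK auxB
  rw [dif_neg (by omega), if_pos (by simp only [Fin.val_mk]; omega)]

lemma Mcol3 (i : Fin n) (j : Fin k) (hj : 3 ≤ j.val) :
    hcatK X (auxB F n k) i j = if i.val = n - k + j.val then (1 : F) else 0 := by
  unfold hcatK auxB
  rw [dif_neg (by omega), if_neg (by simp only [Fin.val_mk]; omega)]
  simp only [Fin.val_mk]
  exact if_congr (by omega) rfl rfl

/-- Bad strictly monotone selections contribute zero. -/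
lemma det_zero_of_bad (f : Fin k → Fin n) (hf : StrictMono f)
    (hbad : ¬ ∀ α : Fin k, 3 ≤ α.val → (f α).val = n - k + α.val) :
    ((hcatK X (auxB F n k)).submatrix f id).det = 0 := by
  classical
  push_neg at hbad
  obtain ⟨a0, ha03, ha0⟩ := hbad
  set s : Finset (Fin k) := univ.filter (fun α => 3 ≤ α.val ∧ (f α).val ≠ n - k + α.val) with hs
  have hne : s.Nonempty := ⟨a0, by simp [hs]; exact ⟨ha03, ha0⟩⟩
  set t := s.max' hne with hts
  have htmem : t ∈ s := s.max'_mem hne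
  have ht3 : 3 ≤ t.val := (Finset.mem_filter.mp htmem).2.1
  have htne : (f t).val ≠ n - k + t.val := (Finset.mem_filter.mp htmem).2.2
  have habove : ∀ β : Fin k, t < β → (f β).val = n - k + β.val := by
    intro β hβ
    by_contra hne'
    have hβ3 : 3 ≤ β.val := by have := Fin.lt_def.mp hβ; omega
    exact absurd (s.le_max' β (by simp [hs]; exact ⟨hβ3, hne'⟩)) (not_le.mpr hβ)
  apply Matrix.det_eq_zero_of_column_eq_zero t
  intro β
  have key : (f β).val ≠ n - k + t.val := by
    rcases lt_trichotomy β t with h | h | h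
    · intro hEq
      by_cases hlast : t.val + 1 < k
      · have h1 : (f ⟨t.val + 1, hlast⟩).val = n - k + (t.val + 1) :=
          habove _ (by simp [Fin.lt_def])
        have h2 := Fin.lt_def.mp (hf (show t < ⟨t.val + 1, hlast⟩ by simp [Fin.lt_def]))
        have h3 := Fin.lt_def.mp (hf h)
        omega
      · have h3 := Fin.lt_def.mp (hf h)
        have h4 : (f t).val < n := (f t).isLt
        have h5 : t.val < k := t.isLt
        omega
    · subst h; exact htne
    · have h1 := habove β h
      have h2 : t.val < β.val := Fin.lt_def.mp h
      omega
  show (hcatK X (auxB F n k)) (f β) t = 0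
  unfold hcatK
  rw [dif_neg (by omega)]
  unfold auxB
  rw [if_neg (by simp only [Fin.val_mk]; omega), if_neg (by simp only [Fin.val_mk]; omega)]

/-- Good selections are extensions. -/
lemma good_eq_fext (f : Fin k → Fin n) (hf : StrictMono f)
    (hgood : ∀ α : Fin k, 3 ≤ α.val → (f α).val = n - k + α.val) :
    ∃ g : Fin 3 → Fin (n - k + 3), StrictMono g ∧ f = fext hk hn g := by
  have hb : ∀ i : Fin k, i.val < 3 → (f i).val < n - k + 3 := by
    intro i hi
    by_cases h3 : 3 < k
    · have h1 : (f ⟨3, h3⟩).val = n - k + 3 := by simpa using hgood ⟨3, h3⟩ (by simp)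
      have h2 := Fin.lt_def.mp (hf (show i < ⟨3, h3⟩ from Fin.lt_def.mpr (by simpa using hi)))
      omega
    · have := (f i).isLt
      omega
  refine ⟨fun i => ⟨(f ⟨i.val, by have := i.isLt; omega⟩).val, hb _ i.isLt⟩, ?_, ?_⟩
  · rw [strictMono_fin3]
    constructor
    · exact Fin.lt_def.mp (hf (show (⟨0, by omega⟩ : Fin k) < ⟨1, by omega⟩ from
        Fin.lt_def.mpr (by simp)))
    · exact Fin.lt_def.mp (hf (show (⟨1, by omega⟩ : Fin k) < ⟨2, by omega⟩ from
        Fin.lt_def.mpr (by simp)))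
  · funext α
    by_cases h : α.val < 3
    · simp only [fext, dif_pos h]
    · simp only [fext, dif_neg h]
      exact Fin.ext (hgood α (by omega))

lemma fext_strictMono {g : Fin 3 → Fin (n - k + 3)} (hg : StrictMono g) :
    StrictMono (fext hk hn g) := by
  intro a b hab
  have hab' : a.val < b.val := Fin.lt_def.mp hab
  simp only [fext]
  split_ifs with h1 h2 h2
  · exact Fin.mk_lt_mk.mpr (hg (show (⟨a.val, h1⟩ : Fin 3) < ⟨b.val, h2⟩ from
      Fin.mk_lt_mk.mpr hab'))
  · exact Fin.mk_lt_mk.mpr (by have := (g ⟨a.val, h1⟩).isLt; omega)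
  · exact absurd hab' (by omega)
  · exact Fin.mk_lt_mk.mpr (by omega)


lemma rowc_val (a : Fin (n - k + 3)) : (rowc hk hn a).val = a.val := rfl

lemma det_good (g : Fin 3 → Fin (n - k + 3)) (hg : StrictMono g) :
    ((hcatK X (auxB F n k)).submatrix (fext hk hn g) id).det =
      (-1 : F) ^ ((k - 3) * (n - k)) *
        (ww (g 0) * DD hk hn X (g 1) (g 2) - ww (g 1) * DD hk hn X (g 0) (g 2)) := by
  have h3k : 3 + (k - 3) = k := by omega
  set q : Fin 3 ⊕ Fin (k - 3) ≃ Fin k := finSumFinEquiv.trans (finCongr h3k) with hq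
  have hql : ∀ i : Fin 3, (q (Sum.inl i)).val = i.val := by
    intro i; simp [hq]
  have hqr : ∀ t : Fin (k - 3), (q (Sum.inr t)).val = 3 + t.val := by
    intro t; simp [hq]
  have hval_lt : ∀ (α : Fin k) (h : α.val < 3),
      (fext hk hn g α).val = (g ⟨α.val, h⟩).val := by
    intro α h; simp [fext, h]
  have hval_ge : ∀ (α : Fin k), ¬ α.val < 3 → (fext hk hn g α).val = n - k + α.val := by
    intro α h; simp [fext, h]
  set A : Matrix (Fin 3) (Fin 3) F := fun i j =>
    hcatK X (auxB F n k) (rowc hk hn (g i)) ⟨j.val, by have := j.isLt; omega⟩ with hA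
  set C : Matrix (Fin (k - 3)) (Fin 3) F := fun t j =>
    hcatK X (auxB F n k) ⟨n - k + 3 + t.val, by have := t.isLt; omega⟩
      ⟨j.val, by have := j.isLt; omega⟩ with hC
  have hblocks : ((hcatK X (auxB F n k)).submatrix (fext hk hn g) id).submatrix q q =
      Matrix.fromBlocks A 0 C 1 := by
    ext x y
    rcases x with i | t <;> rcases y with j | t'
    · simp only [Matrix.submatrix_apply, id_eq, Matrix.fromBlocks_apply₁₁, hA]
      have h3 : (q (Sum.inl i)).val < 3 := by rw [hql]; exact i.isLt
      congr 1
      refine Fin.ext ?_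
      rw [hval_lt _ h3, rowc_val]
      have hmk : (⟨(q (Sum.inl i)).val, h3⟩ : Fin 3) = i := Fin.ext (hql i)
      rw [hmk]
    · simp only [Matrix.submatrix_apply, id_eq, Matrix.fromBlocks_apply₁₂, Matrix.zero_apply]
      have h3 : (q (Sum.inl i)).val < 3 := by rw [hql]; exact i.isLt
      rw [Mcol3 X _ _ (by rw [hqr]; omega), hval_lt _ h3, hqr]
      rw [if_neg (by have := (g ⟨(q (Sum.inl i)).val, h3⟩).isLt; omega)]
    · simp only [Matrix.submatrix_apply, id_eq, Matrix.fromBlocks_apply₂₁, hC]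
      congr 1
      refine Fin.ext ?_
      rw [hval_ge _ (by rw [hqr]; omega), hqr]
      simp only [Fin.val_mk]
      omega
    · simp only [Matrix.submatrix_apply, id_eq, Matrix.fromBlocks_apply₂₂]
      rw [Mcol3 X _ _ (by rw [hqr]; omega), hval_ge _ (by rw [hqr]; omega), hqr, hqr,
        Matrix.one_apply]
      exact if_congr ⟨fun h => Fin.ext (by omega), fun h => by rw [h]⟩ rfl rfl
  have hdet : ((hcatK X (auxB F n k)).submatrix (fext hk hn g) id).det = A.det := by
    rw [← Matrix.det_submatrix_equiv_self q, hblocks, Matrix.det_fromBlocks_zero₁₂,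
      Matrix.det_one, mul_one]
  rw [hdet]
  have e0 : ∀ i : Fin 3, A i 0 = X (rowc hk hn (g i)) 0 := by
    intro i; rw [hA]; exact Mcol0 X _ _ (by simp)
  have e1 : ∀ i : Fin 3, A i 1 = X (rowc hk hn (g i)) 1 := by
    intro i; rw [hA]; exact Mcol1 X _ _ (by simp)
  have e2 : ∀ i : Fin 3, A i 2 =
      if (g i).val ≤ 1 then (-1 : F) ^ ((k - 3) * (n - k)) else 0 := by
    intro i; rw [hA]; exact Mcol2 X _ _ (by simp)
  have hg2 : ¬ (g 2).val ≤ 1 := by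
    have h01 : (g 0).val < (g 1).val := Fin.lt_def.mp (hg (by decide))
    have h12 : (g 1).val < (g 2).val := Fin.lt_def.mp (hg (by decide))
    omega
  rw [Matrix.det_fin_three]
  simp only [e0, e1, e2, if_neg hg2, ww, DD]
  by_cases h0 : (g 0).val ≤ 1 <;> by_cases h1 : (g 1).val ≤ 1 <;>
    simp only [if_pos, if_neg, h0, h1, if_true, if_false] <;> ring

lemma sign_good (g : Fin 3 → Fin (n - k + 3)) :
    (-1 : F) ^ (∑ α : Fin k, (((fext hk hn g) α : ℕ) + (α : ℕ))) =
      (-1) ^ ((g 0 : ℕ) + (g 1 : ℕ) + (g 2 : ℕ)) * (-1) * (-1) ^ ((k - 3) * (n - k)) := by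
  have h3k : 3 + (k - 3) = k := by omega
  set q : Fin 3 ⊕ Fin (k - 3) ≃ Fin k := finSumFinEquiv.trans (finCongr h3k) with hq
  have hql : ∀ i : Fin 3, (q (Sum.inl i)).val = i.val := by
    intro i; simp [hq]
  have hqr : ∀ t : Fin (k - 3), (q (Sum.inr t)).val = 3 + t.val := by
    intro t; simp [hq]
  have hval_lt : ∀ (α : Fin k) (h : α.val < 3),
      (fext hk hn g α).val = (g ⟨α.val, h⟩).val := by
    intro α h; simp [fext, h]
  have hval_ge : ∀ (α : Fin k), ¬ α.val < 3 → (fext hk hn g α).val = n - k + α.val := by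
    intro α h; simp [fext, h]
  have hsum : (∑ α : Fin k, (((fext hk hn g) α : ℕ) + (α : ℕ))) =
      (((g 0 : ℕ) + (g 1 : ℕ) + (g 2 : ℕ)) + 3 + (k - 3) * (n - k)) +
        2 * (3 * (k - 3) + ∑ t : Fin (k - 3), (t : ℕ)) := by
    rw [← Equiv.sum_comp q (fun α => (((fext hk hn g) α : ℕ) + (α : ℕ))), Fintype.sum_sum_type]
    have hL : (∑ i : Fin 3, (((fext hk hn g) (q (Sum.inl i)) : ℕ) + ((q (Sum.inl i)) : ℕ))) =
        ((g 0 : ℕ) + 0) + ((g 1 : ℕ) + 1) + ((g 2 : ℕ) + 2) := by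
      have hterm : ∀ i : Fin 3,
          (((fext hk hn g) (q (Sum.inl i)) : ℕ) + ((q (Sum.inl i)) : ℕ)) =
            ((g i : ℕ) + (i : ℕ)) := by
        intro i
        have h3 : (q (Sum.inl i)).val < 3 := by rw [hql]; exact i.isLt
        rw [hval_lt _ h3]
        have hmk : (⟨(q (Sum.inl i)).val, h3⟩ : Fin 3) = i := Fin.ext (hql i)
        rw [hmk, hql]
      rw [Finset.sum_congr rfl (fun i _ => hterm i), Fin.sum_univ_three]
      simp
    have hR : (∑ t : Fin (k - 3), (((fext hk hn g) (q (Sum.inr t)) : ℕ) +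
        ((q (Sum.inr t)) : ℕ))) =
        (k - 3) * (n - k) + 2 * (3 * (k - 3) + ∑ t : Fin (k - 3), (t : ℕ)) := by
      have hterm : ∀ t : Fin (k - 3),
          (((fext hk hn g) (q (Sum.inr t)) : ℕ) + ((q (Sum.inr t)) : ℕ)) =
            (n - k + 6) + 2 * (t : ℕ) := by
        intro t
        rw [hval_ge _ (by rw [hqr]; omega), hqr]
        omega
      rw [Finset.sum_congr rfl (fun t _ => hterm t), Finset.sum_add_distrib,
        Finset.sum_const, Finset.card_univ, Fintype.card_fin, smul_eq_mul, ← Finset.mul_sum]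
      ring
    rw [hL, hR]
    ring
  rw [hsum, pow_add, pow_add, pow_add]
  have h2 : (-1 : F) ^ (2 * (3 * (k - 3) + ∑ t : Fin (k - 3), (t : ℕ))) = 1 := by
    rw [pow_mul]; norm_num
  rw [h2, mul_one]
  norm_num

/-- The value of each good term. -/
lemma good_term (g : Fin 3 → Fin (n - k + 3)) (hg : StrictMono g) :
    (-1 : F) ^ (∑ α : Fin k, (((fext hk hn g) α : ℕ) + (α : ℕ))) *
      ((hcatK X (auxB F n k)).submatrix (fext hk hn g) id).det =
    (-1 : F) ^ ((g 0 : ℕ) + (g 1 : ℕ) + (g 2 : ℕ)) *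
      (ww (g 1) * DD hk hn X (g 0) (g 2) - ww (g 0) * DD hk hn X (g 1) (g 2)) := by
  rw [sign_good hk hn g, det_good hk hn X g hg]
  have he : (-1 : F) ^ ((k - 3) * (n - k)) * (-1 : F) ^ ((k - 3) * (n - k)) = 1 := by
    rw [← pow_add, ← two_mul, pow_mul]; norm_num
  linear_combination ((-1 : F) ^ ((g 0 : ℕ) + (g 1 : ℕ) + (g 2 : ℕ)) * (-1) *
    (ww (g 0) * DD hk hn X (g 1) (g 2) - ww (g 1) * DD hk hn X (g 0) (g 2))) * he


def termP {F : Type*} [Field F] {n k : ℕ} (hk : 3 ≤ k) (hn : k ≤ n)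
    (X : Matrix (Fin n) (Fin 2) F)
    (p : Fin (n - k + 3) × Fin (n - k + 3) × Fin (n - k + 3)) : F :=
  (-1) ^ ((p.1 : ℕ) + (p.2.1 : ℕ) + (p.2.2 : ℕ)) *
    (ww p.2.1 * DD hk hn X p.1 p.2.2 - ww p.1 * DD hk hn X p.2.1 p.2.2)

set_option maxHeartbeats 2000000 in
lemma cullis_eq_S3 :
    cullisDet (hcatK X (auxB F n k)) =
      ∑ p ∈ Finset.univ.filter
          (fun p : Fin (n - k + 3) × Fin (n - k + 3) × Fin (n - k + 3) =>
            p.1 < p.2.1 ∧ p.2.1 < p.2.2),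
        termP hk hn X p := by
  classical
  unfold cullisDet
  have hsub : (Finset.univ.filter (fun f : Fin k → Fin n =>
        StrictMono f ∧ ∀ α : Fin k, 3 ≤ α.val → (f α).val = n - k + α.val)) ⊆
      (Finset.univ.filter (fun f : Fin k → Fin n => StrictMono f)) := by
    intro f hf
    simp only [Finset.mem_filter, Finset.mem_univ, true_and] at hf ⊢
    exact hf.1
  have hzero : ∀ f ∈ (Finset.univ.filter (fun f : Fin k → Fin n => StrictMono f)),
      f ∉ (Finset.univ.filter (fun f : Fin k → Fin n =>
        StrictMono f ∧ ∀ α : Fin k, 3 ≤ α.val → (f α).val = n - k + α.val)) →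
      (-1 : F) ^ (∑ α : Fin k, ((f α : ℕ) + (α : ℕ))) *
        ((hcatK X (auxB F n k)).submatrix f id).det = 0 := by
    intro f hf hnf
    simp only [Finset.mem_filter, Finset.mem_univ, true_and] at hf hnf
    rw [det_zero_of_bad X f hf (by tauto), mul_zero]
  rw [← Finset.sum_subset hsub hzero]
  -- now change variable to strictly monotone g : Fin 3 → Fin (n-k+3)
  rw [show (∑ f ∈ (Finset.univ.filter (fun f : Fin k → Fin n =>
        StrictMono f ∧ ∀ α : Fin k, 3 ≤ α.val → (f α).val = n - k + α.val)),
      (-1 : F) ^ (∑ α : Fin k, ((f α : ℕ) + (α : ℕ))) *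
        ((hcatK X (auxB F n k)).submatrix f id).det) =
      ∑ g ∈ (Finset.univ.filter (fun g : Fin 3 → Fin (n - k + 3) => StrictMono g)),
        (-1 : F) ^ ((g 0 : ℕ) + (g 1 : ℕ) + (g 2 : ℕ)) *
          (ww (g 1) * DD hk hn X (g 0) (g 2) - ww (g 0) * DD hk hn X (g 1) (g 2)) from ?_]
  · -- second change of variable: to triples
    refine Finset.sum_nbij' (fun g => (g 0, g 1, g 2)) (fun p => ![p.1, p.2.1, p.2.2])
      ?_ ?_ ?_ ?_ ?_
    · intro g hg
      simp only [Finset.mem_filter, Finset.mem_univ, true_and] at hg ⊢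
      exact strictMono_fin3.mp hg
    · intro p hp
      simp only [Finset.mem_filter, Finset.mem_univ, true_and] at hp ⊢
      rw [strictMono_fin3]
      simpa using hp
    · intro g hg
      funext x
      fin_cases x <;> simp
    · intro p hp
      simp
    · intro g hg
      simp [termP]
  · refine (Finset.sum_bij (fun (g : Fin 3 → Fin (n - k + 3)) _ => fext hk hn g)
      ?_ ?_ ?_ ?_).symm
    · intro g hg
      simp only [Finset.mem_filter, Finset.mem_univ, true_and] at hg ⊢
      refine ⟨fext_strictMono hk hn hg, ?_⟩
      intro α hα
      simp [fext, show ¬ α.val < 3 by omega]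
    · intro g1 h1 g2 h2 heq
      funext i
      refine Fin.ext ?_
      have hc := congrFun heq ⟨i.val, by have := i.isLt; omega⟩
      have e1 : (fext hk hn g1 ⟨i.val, by have := i.isLt; omega⟩).val =
          (g1 ⟨i.val, i.isLt⟩).val := by simp [fext, i.isLt]
      have e2 : (fext hk hn g2 ⟨i.val, by have := i.isLt; omega⟩).val =
          (g2 ⟨i.val, i.isLt⟩).val := by simp [fext, i.isLt]
      have heq2 : (⟨i.val, i.isLt⟩ : Fin 3) = i := Fin.ext rfl
      rw [heq2] at e1 e2
      rw [← e1, ← e2]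
      exact congrArg Fin.val hc
    · intro f hf
      simp only [Finset.mem_filter, Finset.mem_univ, true_and] at hf
      obtain ⟨g, hg, rfl⟩ := good_eq_fext hk hn f hf.1 hf.2
      exact ⟨g, by simp only [Finset.mem_filter, Finset.mem_univ, true_and]; exact hg, rfl⟩
    · intro g hg
      simp only [Finset.mem_filter, Finset.mem_univ, true_and] at hg
      exact (good_term hk hn X g hg).symm


lemma invZero :
    (∑ p ∈ (Finset.univ.filter
        (fun p : Fin (n - k + 3) × Fin (n - k + 3) × Fin (n - k + 3) =>
          p.1 < p.2.1 ∧ p.2.1 < p.2.2)).filter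
        (fun p => ¬ (p.1.val = 0 ∧ p.2.1.val = 1)), termP hk hn X p) = 0 := by
    refine Finset.sum_involution (fun p _ => (sw p.1, p.2.1, p.2.2)) ?_ ?_ ?_ ?_
    · intro p hp
      simp only [Finset.mem_filter, Finset.mem_univ, true_and] at hp
      obtain ⟨⟨hab, hbc⟩, hnp⟩ := hp
      have hab' := Fin.lt_def.mp hab
      have hb2 : p.1.val ≤ 1 → 2 ≤ p.2.1.val := by
        intro h
        rcases Nat.lt_or_ge p.1.val 1 with h0 | h1
        · have : p.1.val = 0 := by omega
          have : ¬ p.2.1.val = 1 := fun hb => hnp ⟨this, hb⟩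
          omega
        · have : p.1.val = 1 := by omega
          omega
      by_cases ha0 : p.1.val = 0
      · have hsw : sw p.1 = ⟨1, by omega⟩ := by simp [sw, ha0]
        have hwb : ww (F := F) p.2.1 = 0 := by simp [ww]; omega
        simp only [termP, hsw, hwb, ha0, Fin.val_mk]
        have hwa : ww (F := F) p.1 = 1 := by simp [ww]; omega
        have hwa' : ww (F := F) (⟨1, by omega⟩ : Fin (n - k + 3)) = 1 := by simp [ww]
        rw [hwa, hwa']
        have hpow : (-1 : F) ^ (1 + p.2.1.val + p.2.2.val) =
            -(-1 : F) ^ (0 + p.2.1.val + p.2.2.val) := by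
          rw [show 1 + p.2.1.val + p.2.2.val = (0 + p.2.1.val + p.2.2.val) + 1 by omega,
            pow_succ]
          ring
        rw [hpow]
        ring
      · by_cases ha1 : p.1.val = 1
        · have hsw : sw p.1 = ⟨0, by omega⟩ := by simp [sw, ha0, ha1]
          have hwb : ww (F := F) p.2.1 = 0 := by simp [ww]; omega
          simp only [termP, hsw, hwb, ha1, Fin.val_mk]
          have hwa : ww (F := F) p.1 = 1 := by simp [ww]; omega
          have hwa' : ww (F := F) (⟨0, by omega⟩ : Fin (n - k + 3)) = 1 := by simp [ww]
          rw [hwa, hwa']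
          have hpow : (-1 : F) ^ (1 + p.2.1.val + p.2.2.val) =
              -(-1 : F) ^ (0 + p.2.1.val + p.2.2.val) := by
            rw [show 1 + p.2.1.val + p.2.2.val = (0 + p.2.1.val + p.2.2.val) + 1 by omega,
              pow_succ]
            ring
          rw [hpow]
          ring
        · have hsw : sw p.1 = p.1 := by simp [sw, ha0, ha1]
          have hwb : ww (F := F) p.2.1 = 0 := by simp [ww]; omega
          have hwa : ww (F := F) p.1 = 0 := by simp [ww]; omega
          simp only [termP, hsw, hwb, hwa]
          ring
    · intro p hp hne
      simp only [Finset.mem_filter, Finset.mem_univ, true_and] at hp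
      obtain ⟨⟨hab, hbc⟩, hnp⟩ := hp
      have hab' := Fin.lt_def.mp hab
      by_cases ha0 : p.1.val = 0
      · intro h
        have := congrArg (fun q => (Prod.fst q).val) h
        simp [sw, ha0] at this
      · by_cases ha1 : p.1.val = 1
        · intro h
          have := congrArg (fun q => (Prod.fst q).val) h
          simp [sw, ha0, ha1] at this
        · exfalso
          apply hne
          have hsw : sw p.1 = p.1 := by simp [sw, ha0, ha1]
          have hwb : ww (F := F) p.2.1 = 0 := by simp [ww]; omega
          have hwa : ww (F := F) p.1 = 0 := by simp [ww]; omega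
          simp only [termP, hwb, hwa]
          ring
    · intro p hp
      simp only [Finset.mem_filter, Finset.mem_univ, true_and] at hp ⊢
      obtain ⟨⟨hab, hbc⟩, hnp⟩ := hp
      have hab' := Fin.lt_def.mp hab
      by_cases ha0 : p.1.val = 0
      · have hsw : sw p.1 = ⟨1, by omega⟩ := by simp [sw, ha0]
        have hb2 : 2 ≤ p.2.1.val := by
          rcases Nat.eq_or_lt_of_le (Nat.one_le_iff_ne_zero.mpr
            (by omega : p.2.1.val ≠ 0)) with h | h
          · exact absurd ⟨ha0, h.symm⟩ hnp
          · omega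
        refine ⟨⟨?_, hbc⟩, ?_⟩
        · rw [hsw]; exact Fin.lt_def.mpr (by simp only [Fin.val_mk]; omega)
        · rintro ⟨-, h2c⟩; omega
      · by_cases ha1 : p.1.val = 1
        · have hsw : sw p.1 = ⟨0, by omega⟩ := by simp [sw, ha0, ha1]
          refine ⟨⟨?_, hbc⟩, ?_⟩
          · rw [hsw]; exact Fin.lt_def.mpr (by simp only [Fin.val_mk]; omega)
          · rintro ⟨-, h2c⟩; omega
        · have hsw : sw p.1 = p.1 := by simp [sw, ha0, ha1]
          rw [hsw]
          exact ⟨⟨hab, hbc⟩, hnp⟩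
    · intro p hp
      by_cases ha0 : p.1.val = 0
      · have hsw : sw p.1 = ⟨1, by omega⟩ := by simp [sw, ha0]
        have hsw2 : sw (⟨1, by omega⟩ : Fin (n - k + 3)) = ⟨0, by omega⟩ := by simp [sw]
        simp only [hsw, hsw2]
        exact Prod.ext (Fin.ext (by simp only [Fin.val_mk]; omega)) rfl
      · by_cases ha1 : p.1.val = 1
        · have hsw : sw p.1 = ⟨0, by omega⟩ := by simp [sw, ha0, ha1]
          have hsw2 : sw (⟨0, by omega⟩ : Fin (n - k + 3)) = ⟨1, by omega⟩ := by simp [sw]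
          simp only [hsw, hsw2]
          exact Prod.ext (Fin.ext (by simp only [Fin.val_mk]; omega)) rfl
        · have hsw : sw p.1 = p.1 := by simp [sw, ha0, ha1]
          simp only [hsw]

lemma pred_sum :
    (∑ p ∈ (Finset.univ.filter
        (fun p : Fin (n - k + 3) × Fin (n - k + 3) × Fin (n - k + 3) =>
          p.1 < p.2.1 ∧ p.2.1 < p.2.2)).filter
        (fun p => p.1.val = 0 ∧ p.2.1.val = 1), termP hk hn X p) =
    ∑ l ∈ (Finset.Icc 3 (n - k + 3)).attach,
      (-1 : F) ^ (l : ℕ) *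
        ((X ⟨0, by have := X; omega⟩ 0 - X ⟨1, by have := X; omega⟩ 0) *
            X ⟨(l : ℕ) - 1, by have := X; have := (Finset.mem_Icc.mp l.2).2; omega⟩ 1 -
         (X ⟨0, by have := X; omega⟩ 1 - X ⟨1, by have := X; omega⟩ 1) *
            X ⟨(l : ℕ) - 1, by have := X; have := (Finset.mem_Icc.mp l.2).2; omega⟩ 0) := by
  refine (Finset.sum_bij (fun (l : {x // x ∈ Finset.Icc 3 (n - k + 3)}) _ =>
      ((⟨0, by omega⟩, ⟨1, by omega⟩,
        ⟨(l : ℕ) - 1, by have := Finset.mem_Icc.mp l.2; omega⟩) :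
        Fin (n - k + 3) × Fin (n - k + 3) × Fin (n - k + 3))) ?_ ?_ ?_ ?_).symm
  · intro l _
    have hl := Finset.mem_Icc.mp l.2
    refine Finset.mem_filter.mpr ⟨Finset.mem_filter.mpr ⟨Finset.mem_univ _,
      Fin.lt_def.mpr ?_, Fin.lt_def.mpr ?_⟩, ?_, ?_⟩ <;> simp only [Fin.val_mk] <;> omega
  · intro l1 h1 l2 h2 heq
    have hl1 := Finset.mem_Icc.mp l1.2
    have hl2 := Finset.mem_Icc.mp l2.2
    have hv := congrArg (fun q : Fin (n - k + 3) × Fin (n - k + 3) × Fin (n - k + 3) =>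
      (q.2.2 : ℕ)) heq
    simp only [Fin.val_mk] at hv
    exact Subtype.ext (by omega)
  · intro p hp
    simp only [Finset.mem_filter, Finset.mem_univ, true_and] at hp
    obtain ⟨⟨hab, hbc⟩, ha0, hb1⟩ := hp
    have hbc' := Fin.lt_def.mp hbc
    have hc := p.2.2.isLt
    refine ⟨⟨p.2.2.val + 1, Finset.mem_Icc.mpr (by omega)⟩, Finset.mem_attach _ _, ?_⟩
    refine Prod.ext (Fin.ext ?_) (Prod.ext (Fin.ext ?_) (Fin.ext ?_)) <;>
      simp only [Fin.val_mk] <;> omega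
  · intro l _
    have hl := Finset.mem_Icc.mp l.2
    simp only [termP, ww, DD, rowc, Fin.val_mk]
    norm_num
    rw [show (0 : ℕ) + 1 + ((l : ℕ) - 1) = (l : ℕ) by omega]
    ring

lemma S3_to_RHS :
    (∑ p ∈ Finset.univ.filter
        (fun p : Fin (n - k + 3) × Fin (n - k + 3) × Fin (n - k + 3) =>
          p.1 < p.2.1 ∧ p.2.1 < p.2.2),
      termP hk hn X p) =
    ∑ l ∈ (Finset.Icc 3 (n - k + 3)).attach,
      (-1 : F) ^ (l : ℕ) *
        ((X ⟨0, by have := X; omega⟩ 0 - X ⟨1, by have := X; omega⟩ 0) *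
            X ⟨(l : ℕ) - 1, by have := X; have := (Finset.mem_Icc.mp l.2).2; omega⟩ 1 -
         (X ⟨0, by have := X; omega⟩ 1 - X ⟨1, by have := X; omega⟩ 1) *
            X ⟨(l : ℕ) - 1, by have := X; have := (Finset.mem_Icc.mp l.2).2; omega⟩ 0) := by
  rw [← Finset.sum_filter_add_sum_filter_not
    (Finset.univ.filter
        (fun p : Fin (n - k + 3) × Fin (n - k + 3) × Fin (n - k + 3) =>
          p.1 < p.2.1 ∧ p.2.1 < p.2.2))
    (fun p => p.1.val = 0 ∧ p.2.1.val = 1) (termP hk hn X)]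
  rw [invZero hk hn X, add_zero, pred_sum hk hn X]

end Aux

/-- for `n ≥ k ≥ 3`, for every `n × 2` matrix `X` there is `B` with
`cullisDet (X|B) = Σ_{l=3}^{n−k+3} (−1)^l ((x₁₁ − x₂₁) x_{l,2} − (x₁₂ − x₂₂) x_{l,1})`
(row indices `l` taken `1`-indexed). -/
theorem cullis_exists_diff_sum {F : Type*} [Field F] (n k : ℕ)
    (hk : 3 ≤ k) (hn : k ≤ n) (X : Matrix (Fin n) (Fin 2) F) :
    ∃ B : Matrix (Fin n) (Fin (k - 2)) F,
      cullisDet (hcatK X B) =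
        ∑ l ∈ (Finset.Icc 3 (n - k + 3)).attach,
          (-1 : F) ^ (l : ℕ) *
            ((X ⟨0, by omega⟩ 0 - X ⟨1, by omega⟩ 0) *
                X ⟨(l : ℕ) - 1, by have := Finset.mem_Icc.mp l.2; omega⟩ 1 -
             (X ⟨0, by omega⟩ 1 - X ⟨1, by omega⟩ 1) *
                X ⟨(l : ℕ) - 1, by have := Finset.mem_Icc.mp l.2; omega⟩ 0) :=
  ⟨auxB F n k, (cullis_eq_S3 hk hn X).trans (S3_to_RHS hk hn X)⟩
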